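/- If l is an order bounded linear functional on a Riesz space X whose kernel is a Grothendieck subspace, then either l₊ = 0, or l₋ = 0, or both l₊ and l₋ are Riesz homomorphisms. -/

import Mathlib

set_option linter.unusedSectionVars false

variable {X : Type*} [Lattice X] [AddCommGroup X]
  [CovariantClass X X (· + ·) (· ≤ ·)] [Module ℝ X] [PosSMulMono ℝ X]

/-- A Grothendieck subspace: closed under `x ⊔ y ⊔ 0 + x ⊓ y ⊓ 0`. -/
def IsGrothendieckSubspace (H : Submodule ℝ X) : Prop :=
  ∀ x ∈ H, ∀ y ∈ H, x ⊔ y ⊔ 0 + x ⊓ y ⊓ 0 ∈ H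

/-- A Riesz subspace: closed under the lattice operations. -/
def IsRieszSubspace (H : Submodule ℝ X) : Prop :=
  ∀ x ∈ H, ∀ y ∈ H, x ⊔ y ∈ H ∧ x ⊓ y ∈ H

/-- A Riesz homomorphism: a linear map preserving finite suprema. -/
def IsRieszHom (f : X →ₗ[ℝ] ℝ) : Prop :=
  ∀ x y : X, f (x ⊔ y) = f x ⊔ f y

/-- A positive linear functional. -/
def IsPositive (f : X →ₗ[ℝ] ℝ) : Prop :=
  ∀ x : X, 0 ≤ x → 0 ≤ f x

/-- `p` is the positive part of the order bounded functional `l`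
(so `l₋ = p - l` and `|l| = p + (p - l)`). -/
def IsPosPartOf (l p : X →ₗ[ℝ] ℝ) : Prop :=
  IsPositive p ∧ IsPositive (p - l) ∧
    ∀ x : X, 0 ≤ x → p x = sSup {r : ℝ | ∃ y : X, 0 ≤ y ∧ y ≤ x ∧ l y = r}

/- ### Auxiliary lattice-group lemmas -/

lemma aux_inf_sub (a b c : X) : (b - a) ⊓ (c - a) = (b ⊓ c) - a := by
  rw [sub_eq_add_neg b, sub_eq_add_neg c, ← inf_add, sub_eq_add_neg]

lemma aux_sup_sub (a b c : X) : (b - a) ⊔ (c - a) = (b ⊔ c) - a := by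
  rw [sub_eq_add_neg b, sub_eq_add_neg c, ← sup_add, sub_eq_add_neg]

lemma aux_pos_mono {f : X →ₗ[ℝ] ℝ} (hf : IsPositive f) {a b : X} (h : a ≤ b) :
    f a ≤ f b := by
  have h1 := hf (b - a) (by simpa using h)
  rw [map_sub] at h1; linarith

lemma aux_pos_eq_zero {f : X →ₗ[ℝ] ℝ} (h0 : ∀ x : X, 0 ≤ x → f x = 0) : f = 0 := by
  ext e
  have h1 := h0 (e⁺) (posPart_nonneg e)
  have h2 := h0 (e⁻) (negPart_nonneg e)
  have h3 : f (e⁺ - e⁻) = 0 := by rw [map_sub, h1, h2]; ring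
  rw [posPart_sub_negPart] at h3
  simpa using h3

lemma aux_pos_exists {f : X →ₗ[ℝ] ℝ} (hf : IsPositive f) (h : f ≠ 0) :
    ∃ x : X, 0 ≤ x ∧ 0 < f x := by
  by_contra hc
  push_neg at hc
  exact h (aux_pos_eq_zero fun x hx => le_antisymm (hc x hx) (hf x hx))

lemma aux_inf_add_le {x y z : X} (hx : 0 ≤ x) (_hy : 0 ≤ y) (hz : 0 ≤ z) :
    (x + y) ⊓ z ≤ x ⊓ z + y ⊓ z := by
  have h4 : x ⊓ z + y ⊓ z = ((x + y) ⊓ (x + z)) ⊓ ((z + y) ⊓ (z + z)) := by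
    rw [inf_add x z (y ⊓ z), add_inf, add_inf]
  rw [h4]
  refine le_inf (le_inf inf_le_left ?_) (le_inf ?_ ?_)
  · exact le_trans inf_le_right (le_add_of_nonneg_left hx)
  · exact le_trans inf_le_right (le_add_of_nonneg_right _hy)
  · exact le_trans inf_le_right (le_add_of_nonneg_left hz)

lemma aux_nsmul_disj {y s : X} (hy : 0 ≤ y) (hs : 0 ≤ s) (h : y ⊓ s = 0) (n : ℕ) :
    (n • y) ⊓ s = 0 := by
  induction n with
  | zero => simpa using inf_eq_left.mpr hs
  | succ n ih =>
    refine le_antisymm ?_ (le_inf (nsmul_nonneg hy _) hs)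
    calc ((n + 1) • y) ⊓ s = (n • y + y) ⊓ s := by rw [succ_nsmul]
      _ ≤ (n • y) ⊓ s + y ⊓ s := aux_inf_add_le (nsmul_nonneg hy n) hy hs
      _ = 0 := by rw [ih, h, add_zero]

lemma aux_smul_disj {y s : X} (hy : 0 ≤ y) (hs : 0 ≤ s) (h : y ⊓ s = 0)
    {r : ℝ} (hr : 0 ≤ r) : (r • y) ⊓ s = 0 := by
  obtain ⟨n, hn⟩ := exists_nat_ge r
  have h1 : r • y ≤ (n : ℝ) • y := by
    have h0 := smul_nonneg (sub_nonneg.mpr hn) hy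
    rw [sub_smul] at h0
    exact sub_nonneg.mp h0
  have h2 : ((n : ℝ) • y) ⊓ s = 0 := by
    rw [Nat.cast_smul_eq_nsmul]
    exact aux_nsmul_disj hy hs h n
  refine le_antisymm ?_ (le_inf (smul_nonneg hr hy) hs)
  calc (r • y) ⊓ s ≤ ((n : ℝ) • y) ⊓ s := inf_le_inf_right s h1
    _ = 0 := h2

lemma aux_smul_disj2 {y s : X} (hy : 0 ≤ y) (hs : 0 ≤ s) (h : y ⊓ s = 0)
    {r t : ℝ} (hr : 0 ≤ r) (ht : 0 ≤ t) : (r • y) ⊓ (t • s) = 0 := by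
  have h1 : (r • y) ⊓ s = 0 := aux_smul_disj hy hs h hr
  have h2 : (t • s) ⊓ (r • y) = 0 :=
    aux_smul_disj hs (smul_nonneg hr hy) (by rw [inf_comm]; exact h1) ht
  rw [inf_comm]
  exact h2

lemma aux_S_bdd (l p : X →ₗ[ℝ] ℝ) (hp : IsPosPartOf l p) (x : X) :
    BddAbove {r : ℝ | ∃ y : X, 0 ≤ y ∧ y ≤ x ∧ l y = r} := by
  refine ⟨p x, ?_⟩
  rintro r ⟨y, hy0, hyx, rfl⟩
  have h1 := hp.2.1 y hy0
  rw [LinearMap.sub_apply] at h1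
  have h2 := aux_pos_mono hp.1 hyx
  linarith

lemma aux_approx (l p : X →ₗ[ℝ] ℝ) (hp : IsPosPartOf l p) {x : X} (hx : 0 ≤ x)
    {ε : ℝ} (hε : 0 < ε) :
    ∃ y : X, 0 ≤ y ∧ y ≤ x ∧ p x - ε < l y ∧ l y ≤ p x ∧ p y ≤ l y + ε := by
  have hsup := hp.2.2 x hx
  have hne : Set.Nonempty {r : ℝ | ∃ y : X, 0 ≤ y ∧ y ≤ x ∧ l y = r} :=
    ⟨0, 0, le_refl 0, hx, map_zero l⟩
  obtain ⟨r, hrmem, hr⟩ := exists_lt_of_lt_csSup hne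
    (show p x - ε < sSup _ by rw [← hsup]; linarith)
  obtain ⟨y, hy0, hyx, rfl⟩ := hrmem
  have hb := aux_S_bdd l p hp x
  have hle : l y ≤ p x := by rw [hsup]; exact le_csSup hb ⟨y, hy0, hyx, rfl⟩
  have hpy : p y ≤ p x := aux_pos_mono hp.1 hyx
  exact ⟨y, hy0, hyx, hr, hle, by linarith⟩

lemma aux_neg (l p : X →ₗ[ℝ] ℝ) (hp : IsPosPartOf l p) : IsPosPartOf (-l) (p - l) := by
  obtain ⟨h1, h2, h3⟩ := hp
  refine ⟨h2, ?_, ?_⟩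
  · rw [show p - l - -l = p by abel]; exact h1
  · intro x hx
    have hS := h3 x hx
    have hSne : Set.Nonempty {r : ℝ | ∃ y : X, 0 ≤ y ∧ y ≤ x ∧ l y = r} :=
      ⟨0, 0, le_refl 0, hx, map_zero l⟩
    have hSbdd := aux_S_bdd l p ⟨h1, h2, h3⟩ x
    have hTne : Set.Nonempty {r : ℝ | ∃ y : X, 0 ≤ y ∧ y ≤ x ∧ (-l) y = r} :=
      ⟨0, 0, le_refl 0, hx, map_zero (-l)⟩
    have hTbdd : BddAbove {r : ℝ | ∃ y : X, 0 ≤ y ∧ y ≤ x ∧ (-l) y = r} := by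
      refine ⟨p x - l x, ?_⟩
      rintro r ⟨y, hy0, hyx, rfl⟩
      have hmem : l (x - y) ∈ {r : ℝ | ∃ y : X, 0 ≤ y ∧ y ≤ x ∧ l y = r} :=
        ⟨x - y, sub_nonneg.mpr hyx, sub_le_self x hy0, rfl⟩
      have h5 := le_csSup hSbdd hmem
      rw [← hS, map_sub] at h5
      rw [LinearMap.neg_apply]
      linarith
    refine le_antisymm ?_ ?_
    · rw [LinearMap.sub_apply]
      have h6 : p x ≤ sSup {r : ℝ | ∃ y : X, 0 ≤ y ∧ y ≤ x ∧ (-l) y = r} + l x := by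
        rw [hS]
        apply csSup_le hSne
        rintro r ⟨y, hy0, hyx, rfl⟩
        have hmem : (-l) (x - y) ∈ {r : ℝ | ∃ y : X, 0 ≤ y ∧ y ≤ x ∧ (-l) y = r} :=
          ⟨x - y, sub_nonneg.mpr hyx, sub_le_self x hy0, rfl⟩
        have h5 := le_csSup hTbdd hmem
        rw [LinearMap.neg_apply, map_sub] at h5
        linarith
      linarith
    · apply csSup_le hTne
      rintro r ⟨y, hy0, hyx, rfl⟩
      have hmem : l (x - y) ∈ {r : ℝ | ∃ y : X, 0 ≤ y ∧ y ≤ x ∧ l y = r} :=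
        ⟨x - y, sub_nonneg.mpr hyx, sub_le_self x hy0, rfl⟩
      have h5 := le_csSup hSbdd hmem
      rw [← hS, map_sub] at h5
      rw [LinearMap.neg_apply, LinearMap.sub_apply]
      linarith

lemma aux_riesz_of_disj (f : X →ₗ[ℝ] ℝ) (hf : IsPositive f)
    (hd : ∀ x z : X, 0 ≤ x → 0 ≤ z → x ⊓ z = 0 → f x = 0 ∨ f z = 0) :
    IsRieszHom f := by
  intro x y
  have hdecomp : x ⊔ y = (x - y) ⊔ 0 + y := by
    have h := aux_sup_sub y x y
    rw [sub_self] at h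
    rw [h, sub_add_cancel]
  have h1 : 0 ≤ f ((x - y)⁺) := hf _ (posPart_nonneg _)
  have h2 : 0 ≤ f ((x - y)⁻) := hf _ (negPart_nonneg _)
  have hsum : f ((x - y)⁺) - f ((x - y)⁻) = f (x - y) := by
    rw [← map_sub, posPart_sub_negPart]
  rw [map_sub] at hsum
  have key : f ((x - y)⁺) = max (f x - f y) 0 := by
    rcases hd ((x - y)⁺) ((x - y)⁻) (posPart_nonneg _) (negPart_nonneg _)
      (posPart_inf_negPart_eq_zero (x - y)) with h | h
    · rw [h]
      symm
      apply max_eq_right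
      linarith
    · rw [h] at hsum
      rw [show f x - f y = f ((x - y)⁺) by linarith]
      symm
      exact max_eq_left h1
  have hfin : f (x ⊔ y) = max (f x - f y) 0 + f y := by
    rw [hdecomp, map_add, ← posPart_def, key]
  rw [hfin]
  rcases le_total (f x) (f y) with h | h
  · rw [max_eq_right h, max_eq_right (by linarith : f x - f y ≤ 0)]; ring
  · rw [max_eq_left h, max_eq_left (by linarith : (0:ℝ) ≤ f x - f y)]; ring

set_option maxHeartbeats 1000000 in
lemma aux_key (l p : X →ₗ[ℝ] ℝ) (hp : IsPosPartOf l p)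
    (hker : IsGrothendieckSubspace (LinearMap.ker l))
    {x z t : X} (hx : 0 ≤ x) (hz : 0 ≤ z) (hxz : x ⊓ z = 0)
    (hpx : 0 < p x) (hpz : 0 < p z) (ht : 0 ≤ t) (hlt : l t < 0) : False := by
  set P := p x with hP_def
  set Q := p z with hQ_def
  set c := -(l t) with hc_def
  have hc : 0 < c := by rw [hc_def]; linarith
  have hltc : l t = -c := by rw [hc_def, neg_neg]
  set M := max Q c with hM_def
  set m := min Q c with hm_def
  have hM : 0 < M := lt_of_lt_of_le hc (le_max_right _ _)
  have hm : 0 < m := lt_min hpz hc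
  set ε := min (min (P/2) (Q/2)) (P*m/(8*M)) with hε_def
  have hε : 0 < ε := by
    refine lt_min (lt_min (by linarith) (by linarith)) ?_
    exact div_pos (mul_pos hpx hm) (by linarith)
  have hε1 : ε ≤ P/2 := le_trans (min_le_left _ _) (min_le_left _ _)
  have hε2 : ε ≤ Q/2 := le_trans (min_le_left _ _) (min_le_right _ _)
  have hε3 : ε ≤ P*m/(8*M) := min_le_right _ _
  obtain ⟨y, hy0, hyx, hay, hayP, hpy⟩ := aux_approx l p hp hx hε
  obtain ⟨s, hs0, hsz, hbs, hbsQ, hps⟩ := aux_approx l p hp hz hε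
  set a := l y with ha_def
  set b := l s with hb_def
  have ha0 : 0 < a := by linarith
  have hb0 : 0 < b := by linarith
  have hys : y ⊓ s = 0 :=
    le_antisymm (le_trans (inf_le_inf hyx hsz) (le_of_eq hxz)) (le_inf hy0 hs0)
  set u := b • y - a • s with hu_def
  set v := c • y + a • t with hv_def
  have hlu : l u = 0 := by
    rw [hu_def, map_sub, map_smul, map_smul, smul_eq_mul, smul_eq_mul,
      ← ha_def, ← hb_def]
    ring
  have hlv : l v = 0 := by
    rw [hv_def, map_add, map_smul, map_smul, smul_eq_mul, smul_eq_mul,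
      ← ha_def, hltc]
    ring
  have hg := hker u (LinearMap.mem_ker.mpr hlu) v (LinearMap.mem_ker.mpr hlv)
  rw [LinearMap.mem_ker, map_add] at hg
  have hAs : 0 ≤ a • s := smul_nonneg ha0.le hs0
  have hBy : 0 ≤ b • y := smul_nonneg hb0.le hy0
  have hv0 : 0 ≤ v := by
    rw [hv_def]
    exact add_nonneg (smul_nonneg hc.le hy0) (smul_nonneg ha0.le ht)
  have hdisj : (b • y) ⊓ (a • s) = 0 := aux_smul_disj2 hy0 hs0 hys hb0.le ha0.le
  have hu0 : u ⊓ 0 = -(a • s) := by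
    calc u ⊓ 0 = (b • y - a • s) ⊓ (a • s - a • s) := by rw [sub_self, hu_def]
      _ = ((b • y) ⊓ (a • s)) - a • s := aux_inf_sub _ _ _
      _ = -(a • s) := by rw [hdisj, zero_sub]
  have hF : u ⊓ v ⊓ 0 = -(a • s) := by
    refine le_antisymm ?_ (le_inf (le_inf ?_ ?_) ?_)
    · calc u ⊓ v ⊓ 0 ≤ u ⊓ 0 := inf_le_inf_right 0 inf_le_left
        _ = -(a • s) := hu0
    · rw [hu_def]
      have h7 := sub_le_sub_right hBy (a • s)
      simpa using h7
    · exact le_trans (neg_nonpos.mpr hAs) hv0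
    · exact neg_nonpos.mpr hAs
  have hlF : l (u ⊓ v ⊓ 0) = -(a * b) := by
    rw [hF, map_neg, map_smul, smul_eq_mul, ← hb_def]
  have hlE : l (u ⊔ v ⊔ 0) = a * b := by linarith
  set d := max b c with hd_def
  have hd0 : 0 ≤ d := le_trans hb0.le (le_max_left _ _)
  have hby_dy : b • y ≤ d • y := by
    have h7 := smul_nonneg (sub_nonneg.mpr (le_max_left b c)) hy0
    rw [sub_smul] at h7
    exact sub_nonneg.mp h7
  have hcy_dy : c • y ≤ d • y := by
    have h7 := smul_nonneg (sub_nonneg.mpr (le_max_right b c)) hy0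
    rw [sub_smul] at h7
    exact sub_nonneg.mp h7
  have hEub : u ⊔ v ⊔ 0 ≤ d • y + a • t := by
    refine sup_le (sup_le ?_ ?_) ?_
    · calc u ≤ b • y := by rw [hu_def]; exact sub_le_self _ hAs
        _ ≤ d • y := hby_dy
        _ ≤ d • y + a • t := le_add_of_nonneg_right (smul_nonneg ha0.le ht)
    · rw [hv_def]
      exact add_le_add_left hcy_dy _
    · exact add_nonneg (smul_nonneg hd0 hy0) (smul_nonneg ha0.le ht)
  have hvE : v ≤ u ⊔ v ⊔ 0 := le_trans le_sup_right le_sup_left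
  have hpE : p (u ⊔ v ⊔ 0) ≤ d * p y + a * p t := by
    have h7 := aux_pos_mono hp.1 hEub
    rwa [map_add, map_smul, map_smul, smul_eq_mul, smul_eq_mul] at h7
  have hqv := aux_pos_mono hp.2.1 hvE
  rw [LinearMap.sub_apply, LinearMap.sub_apply, hv_def, map_add, map_add,
    map_smul, map_smul, map_smul, map_smul, smul_eq_mul, smul_eq_mul,
    smul_eq_mul, smul_eq_mul, ← ha_def] at hqv
  have hqy' : 0 ≤ p y - a := by
    have h7 := hp.2.1 y hy0
    rw [LinearMap.sub_apply, ← ha_def] at h7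
    linarith
  have h6 : 0 ≤ c * p y - c * a := by
    rw [← mul_sub]
    exact mul_nonneg hc.le hqy'
  have haclt : a * l t = -(a * c) := by rw [hltc]; ring
  have hstep2 : a * b + a * c ≤ d * p y := by
    rw [hltc] at hqv
    linarith [hpE, hqv, hlE, h6]
  have hdm : d + min b c = b + c := max_add_min b c
  have h10 : d * p y ≤ d * a + d * ε := by
    have h7 := mul_le_mul_of_nonneg_left hpy hd0
    have h9 : d * (a + ε) = d * a + d * ε := by ring
    linarith [h7, h9]
  have h9 : a * (d + min b c) = a * (b + c) := by rw [hdm]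
  have h8 : a * min b c ≤ d * ε := by
    have h9' : a * (d + min b c) = a * d + a * min b c := by ring
    have h9'' : a * (b + c) = a * b + a * c := by ring
    linarith [hstep2, h10, h9, h9', h9'']
  have hdM : d ≤ M := by
    rw [hd_def, hM_def]
    exact max_le_max hbsQ le_rfl
  have h12 : M * ε ≤ P * m / 8 := by
    have h7 := mul_le_mul_of_nonneg_left hε3 hM.le
    have h11 : M * (P * m / (8 * M)) = P * m / 8 := by
      field_simp
    linarith
  have hmn : m / 2 ≤ min b c := by
    refine le_min ?_ ?_
    · have := min_le_left Q c
      linarith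
    · have := min_le_right Q c
      linarith
  have h13 : P / 2 * (m / 2) ≤ a * min b c :=
    mul_le_mul (by linarith) hmn (by linarith) (by linarith)
  have h14 : 0 < P * m := mul_pos hpx hm
  have h15 : d * ε ≤ M * ε := mul_le_mul_of_nonneg_right hdM hε.le
  have h16 : P / 2 * (m / 2) = P * m / 4 := by ring
  linarith [h8, h12, h13, h15, h14, h16]

theorem grothendieck_kernel_trichotomy (l p : X →ₗ[ℝ] ℝ)
    (hp : IsPosPartOf l p)
    (hker : IsGrothendieckSubspace (LinearMap.ker l)) :
    p = 0 ∨ p - l = 0 ∨ (IsRieszHom p ∧ IsRieszHom (p - l)) := by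
  by_cases hp0 : p = 0
  · exact Or.inl hp0
  by_cases hq0 : p - l = 0
  · exact Or.inr (Or.inl hq0)
  have hnlp := aux_neg l p hp
  obtain ⟨w, hw0, hpw⟩ := aux_pos_exists hp.1 hp0
  obtain ⟨w', hw'0, hqw⟩ := aux_pos_exists hp.2.1 hq0
  obtain ⟨tpos, htpos0, hltpos⟩ : ∃ t : X, 0 ≤ t ∧ 0 < l t := by
    have hs := hp.2.2 w hw0
    have hne : Set.Nonempty {r : ℝ | ∃ y : X, 0 ≤ y ∧ y ≤ w ∧ l y = r} :=
      ⟨0, 0, le_refl 0, hw0, map_zero l⟩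
    obtain ⟨r, hrmem, hr⟩ := exists_lt_of_lt_csSup hne
      (show (0:ℝ) < sSup _ by rw [← hs]; exact hpw)
    obtain ⟨y, hy0, hyw, rfl⟩ := hrmem
    exact ⟨y, hy0, hr⟩
  obtain ⟨tneg, htneg0, hltneg⟩ : ∃ t : X, 0 ≤ t ∧ l t < 0 := by
    have hs := hnlp.2.2 w' hw'0
    have hne : Set.Nonempty {r : ℝ | ∃ y : X, 0 ≤ y ∧ y ≤ w' ∧ (-l) y = r} :=
      ⟨0, 0, le_refl 0, hw'0, map_zero (-l)⟩
    obtain ⟨r, hrmem, hr⟩ := exists_lt_of_lt_csSup hne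
      (show (0:ℝ) < sSup _ by rw [← hs]; exact hqw)
    obtain ⟨y, hy0, hyw, rfl⟩ := hrmem
    rw [LinearMap.neg_apply] at hr
    exact ⟨y, hy0, by linarith⟩
  have hker' : IsGrothendieckSubspace (LinearMap.ker (-l)) := by
    have hk : LinearMap.ker (-l) = LinearMap.ker l := by
      ext e
      simp [LinearMap.mem_ker]
    rw [hk]
    exact hker
  refine Or.inr (Or.inr ⟨?_, ?_⟩)
  · apply aux_riesz_of_disj p hp.1
    intro x z hx hz hxz
    by_contra hcon
    push_neg at hcon
    have hpx : 0 < p x := lt_of_le_of_ne (hp.1 x hx) (Ne.symm hcon.1)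
    have hpz : 0 < p z := lt_of_le_of_ne (hp.1 z hz) (Ne.symm hcon.2)
    exact aux_key l p hp hker hx hz hxz hpx hpz htneg0 hltneg
  · apply aux_riesz_of_disj (p - l) hp.2.1
    intro x z hx hz hxz
    by_contra hcon
    push_neg at hcon
    have h1 : 0 < (p - l) x := lt_of_le_of_ne (hp.2.1 x hx) (Ne.symm hcon.1)
    have h2 : 0 < (p - l) z := lt_of_le_of_ne (hp.2.1 z hz) (Ne.symm hcon.2)
    refine aux_key (-l) (p - l) hnlp hker' hx hz hxz h1 h2 htpos0 ?_
    rw [LinearMap.neg_apply]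
    linarith
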